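/- arXiv:2102.02322 — 5 statements merged into one kernel-verified Lean document; each statement's English description precedes it below -/
import Mathlib

section
/- For any real numbers a and b and any p ∈ (1,2], there is a universal constant C (e.g. C = 10) such that | |a-b|^p - |a|^p + p·|a|^{p-1}·sign(a)·b | ≤ C·|b|^p. -/
private lemma abs_rpow_sub_rpow_le {x y s : ℝ} (hx : 0 ≤ x) (hy : 0 ≤ y)
    (hs0 : 0 ≤ s) (hs1 : s ≤ 1) : |x ^ s - y ^ s| ≤ |x - y| ^ s := by
  wlog h : y ≤ x with H
  · rw [abs_sub_comm, abs_sub_comm x y]; exact H hy hx hs0 hs1 (le_of_not_ge h)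
  have hxy : 0 ≤ x - y := by linarith
  have hsub : x ^ s ≤ y ^ s + (x - y) ^ s := by
    have h2 := NNReal.rpow_add_le_add_rpow y.toNNReal (x - y).toNNReal hs0 hs1
    rw [← NNReal.coe_le_coe] at h2
    push_cast at h2
    rw [Real.coe_toNNReal y hy, Real.coe_toNNReal (x - y) hxy] at h2
    calc x ^ s = (y + (x - y)) ^ s := by ring_nf
      _ ≤ _ := h2
  have hmono : y ^ s ≤ x ^ s := Real.rpow_le_rpow hy h hs0
  rw [abs_of_nonneg (by linarith), abs_of_nonneg hxy]
  linarith

private lemma key_mvt {p : ℝ} (hp1 : 1 < p) (hp2 : p ≤ 2) {a b : ℝ} (ha : 0 < a)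
    (hb : |b| ≤ a / 2) : |(a - b) ^ p - a ^ p + p * a ^ (p - 1) * b| ≤ 2 * |b| ^ p := by
  rcases eq_or_ne b 0 with rfl | hb0
  · simp only [sub_zero, mul_zero, add_zero, sub_self, abs_zero]
    positivity
  have hbpos : 0 < |b| := abs_pos.mpr hb0
  have hd : ∀ x : ℝ, HasDerivAt (fun x : ℝ => x ^ p) (p * x ^ (p - 1)) x := fun x =>
    Real.hasDerivAt_rpow_const (Or.inr hp1.le)
  -- obtain ξ with (a - b)^p - a^p = -(p * ξ^(p-1) * b), |a - ξ| ≤ |b|, 0 < ξ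
  obtain ⟨ξ, hξd, hξpos, hξeq⟩ :
      ∃ ξ : ℝ, |a - ξ| ≤ |b| ∧ 0 < ξ ∧ (a - b) ^ p - a ^ p = -(p * ξ ^ (p - 1) * b) := by
    rcases lt_trichotomy b 0 with hbneg | rfl | hbpos'
    · have hab : a < a - b := by linarith
      obtain ⟨ξ, hξ, hslope⟩ := exists_hasDerivAt_eq_slope (fun x : ℝ => x ^ p)
        (fun x => p * x ^ (p - 1)) hab (fun x _ => (hd x).continuousAt.continuousWithinAt)
        (fun x _ => hd x)
      refine ⟨ξ, ?_, by linarith [hξ.1], ?_⟩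
      · rw [abs_of_nonpos (by linarith [hξ.1]), abs_of_neg hbneg]; linarith [hξ.2]
      · rw [show a - b - a = -b by ring, eq_div_iff (neg_ne_zero.mpr hb0)] at hslope
        linear_combination -hslope
    · exact absurd rfl hb0
    · have hab : a - b < a := by linarith
      obtain ⟨ξ, hξ, hslope⟩ := exists_hasDerivAt_eq_slope (fun x : ℝ => x ^ p)
        (fun x => p * x ^ (p - 1)) hab (fun x _ => (hd x).continuousAt.continuousWithinAt)
        (fun x _ => hd x)
      refine ⟨ξ, ?_, ?_, ?_⟩
      · rw [abs_of_nonneg (by linarith [hξ.2]), abs_of_pos hbpos']; linarith [hξ.1]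
      · linarith [hξ.1, (abs_le.mp hb).2]
      · rw [show a - (a - b) = b by ring, eq_div_iff hb0] at hslope
        linear_combination hslope
  have expr_eq : (a - b) ^ p - a ^ p + p * a ^ (p - 1) * b
      = p * b * (a ^ (p - 1) - ξ ^ (p - 1)) := by rw [hξeq]; ring
  rw [expr_eq, abs_mul, abs_mul, abs_of_pos (by linarith : (0:ℝ) < p)]
  have h1 : |a ^ (p - 1) - ξ ^ (p - 1)| ≤ |a - ξ| ^ (p - 1) :=
    abs_rpow_sub_rpow_le ha.le hξpos.le (by linarith) (by linarith)
  have h2 : |a - ξ| ^ (p - 1) ≤ |b| ^ (p - 1) :=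
    Real.rpow_le_rpow (abs_nonneg _) hξd (by linarith)
  calc p * |b| * |a ^ (p - 1) - ξ ^ (p - 1)| ≤ p * |b| * |b| ^ (p - 1) := by
        apply mul_le_mul_of_nonneg_left (h1.trans h2)
        positivity
    _ = p * |b| ^ p := by
        rw [mul_assoc]
        congr 1
        rw [← Real.rpow_one_add' (by positivity) (by intro h; linarith)]
        ring_nf
    _ ≤ 2 * |b| ^ p := by
        apply mul_le_mul_of_nonneg_right hp2
        positivity
private lemma case_small {p : ℝ} (hp1 : 1 < p) (hp2 : p ≤ 2) {a b : ℝ}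
    (hab : |a| ≤ 2 * |b|) :
    |(|a - b| ^ p - |a| ^ p + p * |a| ^ (p - 1) * Real.sign a * b)| ≤ 20 * |b| ^ p := by
  rcases eq_or_ne b 0 with rfl | hb0
  · have : a = 0 := by simp at hab; linarith [abs_nonneg a, hab]
    simp [this, Real.zero_rpow (by linarith : p ≠ 0)]
  have hbpos : 0 < |b| := abs_pos.mpr hb0
  have e1 : |a - b| ^ p ≤ 9 * |b| ^ p := by
    have h1 : |a - b| ≤ 3 * |b| := by
      calc |a - b| ≤ |a| + |b| := abs_sub _ _
        _ ≤ 3 * |b| := by linarith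
    calc |a - b| ^ p ≤ (3 * |b|) ^ p := Real.rpow_le_rpow (abs_nonneg _) h1 (by linarith)
      _ = 3 ^ p * |b| ^ p := Real.mul_rpow (by norm_num) (abs_nonneg _)
      _ ≤ 9 * |b| ^ p := by
          apply mul_le_mul_of_nonneg_right _ (by positivity)
          calc (3:ℝ) ^ p ≤ 3 ^ (2:ℝ) := Real.rpow_le_rpow_of_exponent_le (by norm_num) hp2
            _ = 9 := by rw [show (2:ℝ) = ((2:ℕ):ℝ) by norm_num, Real.rpow_natCast]; norm_num
  have e2 : |a| ^ p ≤ 4 * |b| ^ p := by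
    calc |a| ^ p ≤ (2 * |b|) ^ p := Real.rpow_le_rpow (abs_nonneg _) hab (by linarith)
      _ = 2 ^ p * |b| ^ p := Real.mul_rpow (by norm_num) (abs_nonneg _)
      _ ≤ 4 * |b| ^ p := by
          apply mul_le_mul_of_nonneg_right _ (by positivity)
          calc (2:ℝ) ^ p ≤ 2 ^ (2:ℝ) := Real.rpow_le_rpow_of_exponent_le (by norm_num) hp2
            _ = 4 := by rw [show (2:ℝ) = ((2:ℕ):ℝ) by norm_num, Real.rpow_natCast]; norm_num
  have e3 : |p * |a| ^ (p - 1) * Real.sign a * b| ≤ 4 * |b| ^ p := by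
    have hsign : |Real.sign a| ≤ 1 := by
      rcases lt_trichotomy a 0 with h | h | h
      · simp [Real.sign_of_neg h]
      · simp [h, Real.sign_zero]
      · simp [Real.sign_of_pos h]
    have h4 : |a| ^ (p - 1) ≤ (2 * |b|) ^ (p - 1) :=
      Real.rpow_le_rpow (abs_nonneg _) hab (by linarith)
    have h5 : (2 * |b|) ^ (p - 1) = 2 ^ (p - 1) * |b| ^ (p - 1) :=
      Real.mul_rpow (by norm_num) (abs_nonneg _)
    have h6 : (2:ℝ) ^ (p - 1) ≤ 2 := by
      calc (2:ℝ) ^ (p - 1) ≤ 2 ^ (1:ℝ) :=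
            Real.rpow_le_rpow_of_exponent_le (by norm_num) (by linarith)
        _ = 2 := Real.rpow_one 2
    have h7 : |b| ^ (p - 1) * |b| = |b| ^ p := by
      rw [← Real.rpow_add_one (abs_ne_zero.mpr hb0)]
      norm_num
    calc |p * |a| ^ (p - 1) * Real.sign a * b|
        = p * |a| ^ (p - 1) * |Real.sign a| * |b| := by
          rw [abs_mul, abs_mul, abs_mul, abs_of_pos (by linarith : (0:ℝ) < p),
            abs_of_nonneg (Real.rpow_nonneg (abs_nonneg a) _)]
      _ ≤ p * |a| ^ (p - 1) * 1 * |b| := by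
          apply mul_le_mul_of_nonneg_right _ (abs_nonneg _)
          apply mul_le_mul_of_nonneg_left hsign
          positivity
      _ = p * (|a| ^ (p - 1) * |b|) := by ring
      _ ≤ 2 * ((2 * |b|) ^ (p - 1) * |b|) := by
          apply mul_le_mul hp2 (mul_le_mul_of_nonneg_right h4 (abs_nonneg _)) (by positivity)
            (by norm_num)
      _ = 2 * 2 ^ (p - 1) * (|b| ^ (p - 1) * |b|) := by rw [h5]; ring
      _ ≤ 2 * 2 * (|b| ^ (p - 1) * |b|) := by
          apply mul_le_mul_of_nonneg_right (by linarith) (by positivity)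
      _ = 4 * |b| ^ p := by rw [h7]; norm_num
  calc |(|a - b| ^ p - |a| ^ p + p * |a| ^ (p - 1) * Real.sign a * b)|
      ≤ |a - b| ^ p + |a| ^ p + |p * |a| ^ (p - 1) * Real.sign a * b| := by
        have h8 : (0:ℝ) ≤ |a - b| ^ p := by positivity
        have h9 : (0:ℝ) ≤ |a| ^ p := by positivity
        calc _ ≤ |(|a - b| ^ p - |a| ^ p)| + |p * |a| ^ (p - 1) * Real.sign a * b| :=
              abs_add_le _ _
          _ ≤ _ := by
              have := abs_sub (|a - b| ^ p) (|a| ^ p)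
              rw [abs_of_nonneg h8, abs_of_nonneg h9] at this
              linarith
    _ ≤ 9 * |b| ^ p + 4 * |b| ^ p + 4 * |b| ^ p := by linarith
    _ ≤ 20 * |b| ^ p := by nlinarith [Real.rpow_nonneg (abs_nonneg b) p]

private lemma main_nonneg {p : ℝ} (hp1 : 1 < p) (hp2 : p ≤ 2) {a : ℝ} (ha : 0 ≤ a) (b : ℝ) :
    |(|a - b| ^ p - |a| ^ p + p * |a| ^ (p - 1) * Real.sign a * b)| ≤ 20 * |b| ^ p := by
  by_cases hab : |a| ≤ 2 * |b|
  · exact case_small hp1 hp2 hab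
  push_neg at hab
  have ha' : 0 < a := by
    rcases ha.lt_or_eq with h | h
    · exact h
    · exfalso; rw [← h] at hab; simp at hab; linarith [abs_nonneg b, hab]
  have hb2 : |b| ≤ a / 2 := by rw [abs_of_nonneg ha] at hab; linarith
  have habs : |a| = a := abs_of_nonneg ha
  have hsub : |a - b| = a - b := by
    rw [abs_of_nonneg]
    have := (abs_le.mp hb2).2
    linarith
  rw [habs, hsub, Real.sign_of_pos ha']
  have := key_mvt hp1 hp2 ha' hb2
  calc |(a - b) ^ p - a ^ p + p * a ^ (p - 1) * 1 * b| = |(a - b) ^ p - a ^ p + p * a ^ (p - 1) * b| := by ring_nf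
    _ ≤ 2 * |b| ^ p := this
    _ ≤ 20 * |b| ^ p := by
        have : (0:ℝ) ≤ |b| ^ p := by positivity
        linarith

/-- For any real numbers `a` and `b` and any `p ∈ (1,2]`, there is a universal constant `C`
such that `| |a-b|^p - |a|^p + p·|a|^{p-1}·sign(a)·b | ≤ C·|b|^p`. -/
theorem taylor_expansion_abs_rpow :
    ∃ C : ℝ, 0 < C ∧ ∀ p ∈ Set.Ioc (1 : ℝ) 2, ∀ a b : ℝ,
      |(|a - b| ^ p - |a| ^ p + p * |a| ^ (p - 1) * Real.sign a * b)| ≤ C * |b| ^ p := by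
  refine ⟨20, by norm_num, fun p hp a b => ?_⟩
  obtain ⟨hp1, hp2⟩ := hp
  rcases le_or_gt 0 a with ha | ha
  · exact main_nonneg hp1 hp2 ha b
  · have key := main_nonneg hp1 hp2 (by linarith : (0:ℝ) ≤ -a) (-b)
    have e1 : |-a - -b| = |a - b| := by rw [show -a - -b = -(a - b) by ring, abs_neg]
    have e2 : |-a| = |a| := abs_neg a
    have e3 : Real.sign (-a) = -Real.sign a := Real.sign_neg
    have e4 : |-b| = |b| := abs_neg b
    rw [e1, e2, e3, e4] at key
    calc |(|a - b| ^ p - |a| ^ p + p * |a| ^ (p - 1) * Real.sign a * b)|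
        = |(|a - b| ^ p - |a| ^ p + p * |a| ^ (p - 1) * -Real.sign a * -b)| := by ring_nf
      _ ≤ 20 * |b| ^ p := key
end

section
/- Let A ∈ ℝ^{n×d} with A^⊤A = I and suppose every row satisfies ‖a_i‖_2^2 = d/n. Then for any p ∈ [1,2] and every row i, max_{x ≠ 0} |a_i^⊤x|^p / ‖Ax‖_p^p ≤ d/n. -/
open Matrix

/-- If `AᵀA = I` and every row satisfies `‖a_i‖_2^2 = d/n`, then for any `p ∈ [1,2]`
and every row `i`, `max_{x ≠ 0} |a_i^⊤x|^p / ‖Ax‖_p^p ≤ d/n`. -/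
theorem importance_weight_upper_bound_uniform_leverage {n d : ℕ} (hn : 0 < n)
    (A : Matrix (Fin n) (Fin d) ℝ) (hA : Aᵀ * A = 1)
    (hrow : ∀ i, ∑ j, (A i j) ^ 2 = (d : ℝ) / n) :
    ∀ p ∈ Set.Icc (1 : ℝ) 2, ∀ (i : Fin n), ∀ x : Fin d → ℝ, x ≠ 0 →
      |A i ⬝ᵥ x| ^ p / (∑ j, |A j ⬝ᵥ x| ^ p) ≤ (d : ℝ) / n := by
  rintro p ⟨hp1, hp2⟩ i x hx
  rcases Nat.eq_zero_or_pos d with hd | hd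
  · subst hd
    exact absurd (funext fun j => j.elim0) hx
  set K : ℝ := (d : ℝ) / n with hKdef
  have hK0 : 0 < K := div_pos (by exact_mod_cast hd) (by exact_mod_cast hn)
  set X : ℝ := ∑ k, x k ^ 2 with hXdef
  have hX0 : 0 < X := by
    obtain ⟨k, hk⟩ := Function.ne_iff.mp hx
    exact Finset.sum_pos' (fun j _ => sq_nonneg _)
      ⟨k, Finset.mem_univ k, lt_of_le_of_ne (sq_nonneg _) (Ne.symm (pow_ne_zero 2 hk))⟩
  -- Σ_j (a_j · x)² = ‖x‖²
  have hsum : ∑ j, (A j ⬝ᵥ x) ^ 2 = X := by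
    have h1 : ∑ j, (A j ⬝ᵥ x) ^ 2 = (A *ᵥ x) ⬝ᵥ (A *ᵥ x) := by
      simp [dotProduct, mulVec, sq]
    have h2 : (A *ᵥ x) ⬝ᵥ (A *ᵥ x) = x ⬝ᵥ ((Aᵀ * A) *ᵥ x) := by
      rw [← Matrix.mulVec_mulVec, Matrix.dotProduct_mulVec x,
        Matrix.vecMul_transpose]
    rw [h1, h2, hA, Matrix.one_mulVec]
    simp [dotProduct, sq, hXdef]
  -- Cauchy–Schwarz: each |a_j · x| ≤ √(K X)
  set c : ℝ := Real.sqrt (K * X) with hcdef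
  have hc0 : 0 < c := Real.sqrt_pos.mpr (mul_pos hK0 hX0)
  have hc2 : c ^ 2 = K * X := Real.sq_sqrt (le_of_lt (mul_pos hK0 hX0))
  have hCS : ∀ j, |A j ⬝ᵥ x| ≤ c := by
    intro j
    have hcs : (A j ⬝ᵥ x) ^ 2 ≤ (∑ k, A j k ^ 2) * (∑ k, x k ^ 2) :=
      Finset.sum_mul_sq_le_sq_mul_sq _ _ _
    rw [hrow j] at hcs
    have : (A j ⬝ᵥ x) ^ 2 ≤ K * X := hcs
    calc |A j ⬝ᵥ x| = Real.sqrt ((A j ⬝ᵥ x) ^ 2) := (Real.sqrt_sq_eq_abs _).symm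
      _ ≤ c := Real.sqrt_le_sqrt this
  have hp0 : (0 : ℝ) < p := by linarith
  have h2p : (0 : ℝ) ≤ 2 - p := by linarith
  set S : ℝ := ∑ j, |A j ⬝ᵥ x| ^ p with hSdef
  -- X ≤ S * c^(2-p)
  have hXS : X ≤ S * c ^ (2 - p) := by
    have hterm : ∀ j, (A j ⬝ᵥ x) ^ 2 ≤ |A j ⬝ᵥ x| ^ p * c ^ (2 - p) := by
      intro j
      set y : ℝ := |A j ⬝ᵥ x| with hydef
      have hy0 : 0 ≤ y := abs_nonneg _
      rcases eq_or_lt_of_le hy0 with hy | hy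
      · have : (A j ⬝ᵥ x) ^ 2 = 0 := by
          rw [← sq_abs, ← hydef, ← hy]; ring
        rw [this]
        positivity
      · have h1 : (A j ⬝ᵥ x) ^ 2 = y ^ ((2 : ℝ)) := by
          rw [Real.rpow_two, ← sq_abs]
        have hsplit : y ^ ((2 : ℝ)) = y ^ p * y ^ (2 - p) := by
          rw [← Real.rpow_add hy]; norm_num
        rw [h1, hsplit]
        exact mul_le_mul_of_nonneg_left
          (Real.rpow_le_rpow hy0 (hCS j) h2p) (le_of_lt (Real.rpow_pos_of_pos hy p))
    calc X = ∑ j, (A j ⬝ᵥ x) ^ 2 := hsum.symm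
      _ ≤ ∑ j, |A j ⬝ᵥ x| ^ p * c ^ (2 - p) := Finset.sum_le_sum fun j _ => hterm j
      _ = S * c ^ (2 - p) := by rw [← Finset.sum_mul]
  have hcp : 0 < c ^ (2 - p) := Real.rpow_pos_of_pos hc0 _
  have hS0 : 0 < S := by
    by_contra h
    push_neg at h
    nlinarith
  rw [div_le_iff₀ hS0]
  -- suffices after multiplying by c^(2-p)
  have key : |A i ⬝ᵥ x| ^ p * c ^ (2 - p) ≤ (K * S) * c ^ (2 - p) := by
    have h1 : |A i ⬝ᵥ x| ^ p ≤ c ^ p :=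
      Real.rpow_le_rpow (abs_nonneg _) (hCS i) (le_of_lt hp0)
    have h2 : c ^ p * c ^ (2 - p) = K * X := by
      rw [← Real.rpow_add hc0]
      rw [show p + (2 - p) = (2 : ℝ) by ring, Real.rpow_two, hc2]
    calc |A i ⬝ᵥ x| ^ p * c ^ (2 - p) ≤ c ^ p * c ^ (2 - p) :=
          mul_le_mul_of_nonneg_right h1 (le_of_lt hcp)
      _ = K * X := h2
      _ ≤ K * (S * c ^ (2 - p)) := by
          exact mul_le_mul_of_nonneg_left hXS (le_of_lt hK0)
      _ = (K * S) * c ^ (2 - p) := by ring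
  exact le_of_mul_le_mul_right key hcp
end

section
/- Let A ∈ ℝ^{n×d} with rows a_i, let W = diag(w_1,…,w_n) with all w_i > 0, assume A^⊤W^{−1}A is invertible, and suppose a_i^⊤(A^⊤W^{−1}A)^{−1}a_i = w_i^2 for all i (i.e., w are the ℓ_1 Lewis weights). If additionally w_i ≤ u for all i, then the projection Π = A(A^⊤W^{−1}A)^{−1}A^⊤W^{−1} has all its columns Π_i satisfying ‖Π_i‖_2^2 ≤ u. -/
open Matrix

/-- If `w` are the ℓ₁ Lewis weights of `A` (i.e., `a_i^⊤(AᵀW⁻¹A)⁻¹a_i = w_i²`) and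
`w_i ≤ u` for all `i`, then every column `Π_i` of the weighted projection
`Π = A(AᵀW⁻¹A)⁻¹AᵀW⁻¹` satisfies `‖Π_i‖_2² ≤ u`. -/
theorem lewis_projection_column_norm_bound {n d : ℕ}
    (A : Matrix (Fin n) (Fin d) ℝ) (w : Fin n → ℝ) (u : ℝ)
    (hw : ∀ i, 0 < w i)
    (hM : IsUnit (Aᵀ * (Matrix.diagonal w)⁻¹ * A))
    (hlewis : ∀ i, A i ⬝ᵥ ((Aᵀ * (Matrix.diagonal w)⁻¹ * A)⁻¹ *ᵥ A i) = (w i) ^ 2)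
    (hu : ∀ i, w i ≤ u) :
    ∀ i, ∑ j, ((A * (Aᵀ * (Matrix.diagonal w)⁻¹ * A)⁻¹ * Aᵀ *
      (Matrix.diagonal w)⁻¹) j i) ^ 2 ≤ u := by
  intro i
  set M := Aᵀ * (Matrix.diagonal w)⁻¹ * A with hMdef
  set v := M⁻¹ *ᵥ A i with hv
  have hwne : ∀ j, w j ≠ 0 := fun j => (hw j).ne'
  have hdet : IsUnit M.det := (Matrix.isUnit_iff_isUnit_det M).mp hM
  have hdiag : (Matrix.diagonal w)⁻¹ = Matrix.diagonal (fun j => (w j)⁻¹) := by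
    apply Matrix.inv_eq_right_inv
    rw [Matrix.diagonal_mul_diagonal]
    have h0 : (fun j => w j * (w j)⁻¹) = fun _ => (1 : ℝ) :=
      funext fun j => mul_inv_cancel₀ (hwne j)
    rw [h0, Matrix.diagonal_one]
  have hentry : ∀ j, (A * M⁻¹ * Aᵀ * (Matrix.diagonal w)⁻¹) j i
      = (w i)⁻¹ * (A j ⬝ᵥ v) := by
    intro j
    rw [hdiag, Matrix.mul_apply]
    have h2 : (A * M⁻¹ * Aᵀ) j i = A j ⬝ᵥ v := by
      simp only [Matrix.mul_apply, Matrix.mulVec, dotProduct, Matrix.transpose_apply,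
        Finset.sum_mul, Finset.mul_sum, hv]
      rw [Finset.sum_comm]
      apply Finset.sum_congr rfl
      intro k _
      apply Finset.sum_congr rfl
      intro l _
      ring
    rw [Finset.sum_eq_single i]
    · rw [h2, Matrix.diagonal_apply_eq]; ring
    · intro b _ hb
      simp [Matrix.diagonal_apply_ne _ hb]
    · intro h; exact absurd (Finset.mem_univ i) h
  have hMv : M *ᵥ v = A i := by
    rw [hv, Matrix.mulVec_mulVec, Matrix.mul_nonsing_inv M hdet, Matrix.one_mulVec]
  have hkey : ∑ j, (w j)⁻¹ * (A j ⬝ᵥ v) ^ 2 = (w i) ^ 2 := by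
    have h1 : v ⬝ᵥ (M *ᵥ v) = (w i) ^ 2 := by
      rw [hMv, dotProduct_comm]
      exact hlewis i
    calc ∑ j, (w j)⁻¹ * (A j ⬝ᵥ v) ^ 2 = v ⬝ᵥ (M *ᵥ v) := by
          rw [hMdef, hdiag, ← Matrix.mulVec_mulVec, ← Matrix.mulVec_mulVec,
            Matrix.dotProduct_mulVec, Matrix.vecMul_transpose]
          simp only [dotProduct, Matrix.mulVec_diagonal]
          apply Finset.sum_congr rfl
          intro j _
          simp only [Matrix.mulVec, dotProduct]
          ring
      _ = (w i) ^ 2 := h1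
  have hcsum : ∑ j, (A j ⬝ᵥ v) ^ 2 ≤ u * (w i) ^ 2 := by
    rw [← hkey, Finset.mul_sum]
    apply Finset.sum_le_sum
    intro j _
    have hnn : 0 ≤ (w j)⁻¹ * (A j ⬝ᵥ v) ^ 2 :=
      mul_nonneg (inv_nonneg.mpr (hw j).le) (sq_nonneg _)
    calc (A j ⬝ᵥ v) ^ 2 = w j * ((w j)⁻¹ * (A j ⬝ᵥ v) ^ 2) := by
          rw [← mul_assoc, mul_inv_cancel₀ (hwne j), one_mul]
      _ ≤ u * ((w j)⁻¹ * (A j ⬝ᵥ v) ^ 2) := mul_le_mul_of_nonneg_right (hu j) hnn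
  calc ∑ j, ((A * M⁻¹ * Aᵀ * (Matrix.diagonal w)⁻¹) j i) ^ 2
      = ((w i)⁻¹) ^ 2 * ∑ j, (A j ⬝ᵥ v) ^ 2 := by
        rw [Finset.mul_sum]
        apply Finset.sum_congr rfl
        intro j _
        rw [hentry j]; ring
    _ ≤ ((w i)⁻¹) ^ 2 * (u * (w i) ^ 2) :=
        mul_le_mul_of_nonneg_left hcsum (sq_nonneg _)
    _ = u := by
        rw [inv_pow, inv_mul_eq_div, mul_div_assoc, div_self (pow_ne_zero 2 (hwne i)), mul_one]
end

section
/- Let A ∈ ℝ^{n×d} whose ℓ_p Lewis weights are (w_1,…,w_n) for p ∈ [1,2], and let A' ∈ ℝ^{(n+k−1)×d} be obtained by replacing the last row a_n with k copies of a_n/k^{1/p}. Then the ℓ_p Lewis weights of A' are (w_1,…,w_{n−1}, w_n/k, …, w_n/k). -/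
open Matrix

/-- `w` satisfies the defining equations of the ℓ_p Lewis weights of `A`:
`a_i^⊤ (Aᵀ diag(w)^{1-2/p} A)⁻¹ a_i = w_i^{2/p}` with all `w_i > 0`. -/
def IsLewisWeight (p : ℝ) {ι : Type*} [Fintype ι] [DecidableEq ι] {d : ℕ}
    (A : Matrix ι (Fin d) ℝ) (w : ι → ℝ) : Prop :=
  (∀ i, 0 < w i) ∧
    ∀ i, A i ⬝ᵥ ((Aᵀ * Matrix.diagonal (fun j => w j ^ (1 - 2 / p)) * A)⁻¹ *ᵥ A i) =
      w i ^ (2 / p)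

lemma tri_apply {ι : Type*} [Fintype ι] [DecidableEq ι] {d : ℕ}
    (B : Matrix ι (Fin d) ℝ) (f : ι → ℝ) (x y : Fin d) :
    (Bᵀ * Matrix.diagonal f * B) x y = ∑ i, f i * B i x * B i y := by
  rw [Matrix.mul_assoc, Matrix.mul_apply]
  refine Finset.sum_congr rfl fun i _ => ?_
  rw [Matrix.diagonal_mul, Matrix.transpose_apply]
  ring

/-- Splitting the last row `a` of a matrix into `k` copies of `a/k^{1/p}` replaces its
ℓ_p Lewis weight `w_n` by `k` copies of `w_n/k`, keeping the other Lewis weights. -/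
theorem lewis_weights_of_split_row {α : Type*} [Fintype α] [DecidableEq α]
    {d k : ℕ} (hk : 0 < k) (p : ℝ) (hp : p ∈ Set.Icc (1 : ℝ) 2)
    (A₀ : Matrix α (Fin d) ℝ) (a : Fin d → ℝ) (w : α → ℝ) (wn : ℝ)
    (h : IsLewisWeight p (Matrix.of (Sum.elim A₀ (fun _ : Unit => a)))
      (Sum.elim w (fun _ : Unit => wn))) :
    IsLewisWeight p
      (Matrix.of (Sum.elim A₀ (fun _ : Fin k => fun j => a j / (k : ℝ) ^ (1 / p))))
      (Sum.elim w (fun _ : Fin k => wn / k)) := by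
  obtain ⟨hw, heq⟩ := h
  have hp0 : (0:ℝ) < p := lt_of_lt_of_le one_pos hp.1
  have hk' : (0:ℝ) < (k:ℝ) := Nat.cast_pos.mpr hk
  have hwn : 0 < wn := hw (Sum.inr ())
  set c : ℝ := (k:ℝ) ^ (1/p) with hc
  have hc0 : (0:ℝ) < c := Real.rpow_pos_of_pos hk' _
  set t : ℝ := 1 - 2/p with ht
  have hcc : c * c = (k:ℝ) ^ (2/p) := by
    rw [hc, ← Real.rpow_add hk']; ring_nf
  have hkt0 : ((k:ℝ)^t) ≠ 0 := (Real.rpow_pos_of_pos hk' t).ne'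
  have hkt : (k:ℝ)^(2/p) * (k:ℝ)^t = (k:ℝ) := by
    rw [← Real.rpow_add hk', ht]
    norm_num
  have key : (k:ℝ) * ((wn/k) ^ t) = wn ^ t * (c * c) := by
    rw [Real.div_rpow hwn.le hk'.le, hcc]
    rw [mul_div_assoc', div_eq_iff hkt0, mul_assoc, hkt]
    ring
  have hM : (Matrix.of (Sum.elim A₀ (fun _ : Fin k => fun j => a j / c)))ᵀ *
        Matrix.diagonal (fun j => Sum.elim w (fun _ : Fin k => wn/k) j ^ t) *
        Matrix.of (Sum.elim A₀ (fun _ : Fin k => fun j => a j / c)) =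
      (Matrix.of (Sum.elim A₀ (fun _ : Unit => a)))ᵀ *
        Matrix.diagonal (fun j => Sum.elim w (fun _ : Unit => wn) j ^ t) *
        Matrix.of (Sum.elim A₀ (fun _ : Unit => a)) := by
    ext x y
    rw [tri_apply, tri_apply, Fintype.sum_sum_type, Fintype.sum_sum_type]
    congr 1
    simp only [Sum.elim_inr, Matrix.of_apply, Sum.elim]
    rw [Finset.sum_const, Finset.card_univ, Fintype.card_fin, nsmul_eq_mul,
      Finset.sum_const, Finset.card_univ, Fintype.card_unit, one_smul]
    have : (k:ℝ) * ((wn/k)^t * (a x / c) * (a y / c)) =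
        ((k:ℝ) * ((wn/k)^t)) * (a x * a y) / (c * c) := by ring
    rw [this, key]
    field_simp
  constructor
  · rintro (i | i)
    · exact hw (Sum.inl i)
    · exact div_pos hwn hk'
  · rintro (i | i) <;> rw [hM]
    · exact heq (Sum.inl i)
    · have hv : (Matrix.of (Sum.elim A₀ (fun _ : Fin k => fun j => a j / c))) (Sum.inr i)
          = c⁻¹ • a := by
        funext j
        simp [div_eq_mul_inv, mul_comm, Sum.elim]
      rw [hv, Matrix.mulVec_smul, smul_dotProduct, dotProduct_smul, smul_eq_mul, smul_eq_mul]
      have hthis := heq (Sum.inr ())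
      rw [show (Matrix.of (Sum.elim A₀ fun _ : Unit => a)) (Sum.inr ()) = a from rfl] at hthis
      rw [show (Sum.elim w fun _ : Unit => wn) (Sum.inr ()) = wn from rfl] at hthis
      simp only [Sum.elim_inr]
      rw [hthis, Real.div_rpow hwn.le hk'.le, ← hcc]
      field_simp
end

section
/- Let A ∈ ℝ^{n×d} with A^⊤A = I, p ∈ (1,2), and suppose each row a_i satisfies |a_i^⊤x|^p ≤ (αd/n)·‖Ax‖_p^p for all x (almost uniform ℓ_p importance weights). Then for every β ∈ ℝ^d, ‖β‖_2 ≤ ‖Aβ‖_p · (α·d/n)^{(2−p)/(2p)}. -/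
open Matrix

/-- If `AᵀA = I` and the ℓ_p importance weights of `A` are almost uniform, i.e.
`|a_i^⊤x|^p ≤ (αd/n)·‖Ax‖_p^p` for all `x` and `i`, then for every `β`,
`‖β‖_2 ≤ ‖Aβ‖_p · (α·d/n)^{(2−p)/(2p)}`. -/
theorem two_norm_le_p_norm_of_uniform_importance {n d : ℕ} (hn : 0 < n) (hd : 0 < d)
    (p α : ℝ) (hp : p ∈ Set.Ioo (1 : ℝ) 2) (hα : 0 < α)
    (A : Matrix (Fin n) (Fin d) ℝ) (hA : Aᵀ * A = 1)
    (himp : ∀ (x : Fin d → ℝ) (i : Fin n),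
      |A i ⬝ᵥ x| ^ p ≤ (α * d / n) * ∑ j, |A j ⬝ᵥ x| ^ p) :
    ∀ β : Fin d → ℝ,
      Real.sqrt (∑ j, (β j) ^ 2) ≤
        (∑ i, |A i ⬝ᵥ β| ^ p) ^ (1 / p) * (α * d / n) ^ ((2 - p) / (2 * p)) := by
  obtain ⟨hp1, hp2⟩ := hp
  have hp0 : (0:ℝ) < p := by linarith
  intro β
  set S : ℝ := ∑ i, |A i ⬝ᵥ β| ^ p with hSdef
  have hSnn : 0 ≤ S := Finset.sum_nonneg fun i _ => Real.rpow_nonneg (abs_nonneg _) _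
  have hc : (0:ℝ) < α * d / n := by positivity
  -- Step 1: ∑ β j ^ 2 = ∑ (A i ⬝ᵥ β)^2
  have h1 : ∑ j, (β j) ^ 2 = ∑ i, (A i ⬝ᵥ β) ^ 2 := by
    have h := congrArg (fun M => β ⬝ᵥ (M *ᵥ β)) hA
    simp only [← Matrix.mulVec_mulVec, Matrix.one_mulVec] at h
    rw [Matrix.dotProduct_mulVec, Matrix.vecMul_transpose] at h
    simpa [dotProduct, Matrix.mulVec, sq] using h.symm
  -- Step 2: termwise bound
  have hC : 0 ≤ ((α * d / n) * S) ^ ((2 - p) / p) := Real.rpow_nonneg (by positivity) _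
  have h2 : ∀ i : Fin n, (A i ⬝ᵥ β) ^ 2 ≤ |A i ⬝ᵥ β| ^ p * ((α * d / n) * S) ^ ((2 - p) / p) := by
    intro i
    have habs : (A i ⬝ᵥ β) ^ 2 = |A i ⬝ᵥ β| ^ (p + (2 - p)) := by
      rw [show p + (2 - p) = (2:ℝ) by ring, show ((2:ℝ)) = ((2:ℕ):ℝ) by norm_num,
        Real.rpow_natCast, sq_abs]
    rw [habs, Real.rpow_add' (abs_nonneg _) (by norm_num)]
    gcongr
    have : |A i ⬝ᵥ β| ^ (2 - p) = (|A i ⬝ᵥ β| ^ p) ^ ((2 - p) / p) := by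
      rw [← Real.rpow_mul (abs_nonneg _)]
      congr 1
      field_simp
    rw [this]
    exact Real.rpow_le_rpow (Real.rpow_nonneg (abs_nonneg _) _) (himp β i)
      (div_nonneg (by linarith) hp0.le)
  -- Step 3: sum the bound
  have h3 : ∑ j, (β j) ^ 2 ≤ S ^ ((2:ℝ) / p) * (α * d / n) ^ ((2 - p) / p) := by
    calc ∑ j, (β j) ^ 2 = ∑ i, (A i ⬝ᵥ β) ^ 2 := h1
      _ ≤ ∑ i, |A i ⬝ᵥ β| ^ p * ((α * d / n) * S) ^ ((2 - p) / p) :=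
          Finset.sum_le_sum fun i _ => h2 i
      _ = S * ((α * d / n) * S) ^ ((2 - p) / p) := by rw [← Finset.sum_mul]
      _ = S ^ ((2:ℝ) / p) * (α * d / n) ^ ((2 - p) / p) := by
          rw [Real.mul_rpow hc.le hSnn]
          rw [show S * ((α * d / n) ^ ((2 - p) / p) * S ^ ((2 - p) / p))
              = (S ^ (1:ℝ) * S ^ ((2 - p) / p)) * (α * d / n) ^ ((2 - p) / p) by
            rw [Real.rpow_one]; ring]
          rw [← Real.rpow_add' hSnn (by
            intro h
            nlinarith [div_nonneg (show (0:ℝ) ≤ 2 - p by linarith) hp0.le])]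
          congr 1
          field_simp
          ring_nf
  -- Step 4: take square roots
  calc Real.sqrt (∑ j, (β j) ^ 2)
      ≤ Real.sqrt (S ^ ((2:ℝ) / p) * (α * d / n) ^ ((2 - p) / p)) := Real.sqrt_le_sqrt h3
    _ = S ^ (1 / p) * (α * d / n) ^ ((2 - p) / (2 * p)) := by
        rw [Real.sqrt_eq_rpow, Real.mul_rpow (Real.rpow_nonneg hSnn _)
          (Real.rpow_nonneg hc.le _), ← Real.rpow_mul hSnn, ← Real.rpow_mul hc.le]
        rw [show (2:ℝ) / p * (1 / 2) = 1 / p by field_simp,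
            show (2 - p) / p * (1 / 2) = (2 - p) / (2 * p) by ring]
end
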